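/- arXiv:math/0606053 — 2 statements merged into one kernel-verified Lean document; each statement's English description precedes it below -/
import Mathlib

section
/- Let n ≥ 4, N = 2n/(n-2), and Ω a smooth bounded open set of ℝⁿ. Let w solve Δw = 1 in Ω with w = 0 on ∂Ω, let 0 < α < 1, and let ε > 0 satisfy ε · (sup_Ω w) ≤ α. Then every solution u of Δu = u^{N-1} + ε u in Ω with u > 0 in Ω and u = 0 on ∂Ω satisfies sup_Ω u ≥ ((1 − α)/(sup_Ω w))^{1/(N-2)}. -/
open MeasureTheory Metric Set

/-- The geometric Laplacian `Δu = -∑ ∂²u/∂xᵢ²` on `ℝⁿ`. -/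
noncomputable def lap {n : ℕ} (u : EuclideanSpace ℝ (Fin n) → ℝ)
    (x : EuclideanSpace ℝ (Fin n)) : ℝ :=
  -∑ i : Fin n,
    iteratedFDeriv ℝ 2 u x ![EuclideanSpace.single i (1 : ℝ), EuclideanSpace.single i (1 : ℝ)]

/-- `Ω` has smooth (`C^∞`) boundary: near every boundary point, `Ω` is the sublevel
set of a smooth local defining function with nonvanishing differential. -/
def HasSmoothBoundary {n : ℕ} (Ω : Set (EuclideanSpace ℝ (Fin n))) : Prop :=
  ∀ x ∈ frontier Ω, ∃ (U : Set (EuclideanSpace ℝ (Fin n))) (f : EuclideanSpace ℝ (Fin n) → ℝ),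
    IsOpen U ∧ x ∈ U ∧ ContDiff ℝ (⊤ : ℕ∞) f ∧ (∀ y ∈ U, fderiv ℝ f y ≠ 0) ∧
    Ω ∩ U = {y | y ∈ U ∧ f y < 0}

/-- `u` is a solution of `Δu = u^p` in `Ω`, positive in `Ω`, vanishing on `∂Ω`,
of class `C²(Ω) ∩ C(closure Ω)`. -/
def IsSolution {n : ℕ} (Ω : Set (EuclideanSpace ℝ (Fin n)))
    (u : EuclideanSpace ℝ (Fin n) → ℝ) (p : ℝ) : Prop :=
  ContDiffOn ℝ 2 u Ω ∧ ContinuousOn u (closure Ω) ∧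
  (∀ x ∈ Ω, lap u x = u x ^ p) ∧ (∀ x ∈ Ω, 0 < u x) ∧ (∀ x ∈ frontier Ω, u x = 0)

open Filter Topology in
lemma second_deriv_nonpos_of_isLocalMax {g g' : ℝ → ℝ} {c : ℝ}
    (hg : ∀ᶠ t in 𝓝 (0:ℝ), HasDerivAt g (g' t) t)
    (hg' : HasDerivAt g' c 0) (hmax : IsLocalMax g 0) : c ≤ 0 := by
  by_contra hc
  push_neg at hc
  have hg0 : g' 0 = 0 := by
    have h1 : deriv g 0 = 0 := hmax.deriv_eq_zero
    have h2 : deriv g 0 = g' 0 := (hg.self_of_nhds).deriv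
    rw [h2] at h1; exact h1
  have hslope : Tendsto (fun t => g' t / t) (𝓝[≠] (0:ℝ)) (𝓝 c) := by
    have h := hasDerivAt_iff_tendsto_slope.mp hg'
    have : (slope g' 0) = fun t => g' t / t := by
      funext t; simp [slope_def_field, hg0]
    rwa [this] at h
  have hev : ∀ᶠ t in 𝓝[≠] (0:ℝ), 0 < g' t / t :=
    hslope.eventually (eventually_gt_nhds hc)
  rw [eventually_nhdsWithin_iff] at hev
  obtain ⟨δ, hδ, hball⟩ := Metric.eventually_nhds_iff.mp (hev.and (hg.and hmax))
  have hmem : ∀ t : ℝ, |t| < δ →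
      ((t ≠ 0 → 0 < g' t / t) ∧ HasDerivAt g (g' t) t ∧ g t ≤ g 0) := by
    intro t ht
    exact hball (by simpa [Real.dist_eq] using ht)
  have hmono : StrictMonoOn g (Icc 0 (δ/2)) := by
    apply strictMonoOn_of_deriv_pos (convex_Icc _ _)
    · intro t ht
      have h := hmem t (by
        rw [abs_of_nonneg ht.1]; linarith [ht.2])
      exact h.2.1.continuousAt.continuousWithinAt
    · intro t ht
      rw [interior_Icc] at ht
      have ht' : |t| < δ := by rw [abs_of_pos ht.1]; linarith [ht.2]
      have h := hmem t ht'
      rw [h.2.1.deriv]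
      have := h.1 (ne_of_gt ht.1)
      exact (div_pos_iff.mp this).resolve_right (fun h' => absurd ht.1 (not_lt.mpr h'.2.le)) |>.1
  have h1 : g 0 < g (δ/2) := hmono (by constructor <;> [rfl; positivity]) ⟨by positivity, le_refl _⟩ (by positivity)
  have h2 : g (δ/2) ≤ g 0 := (hmem (δ/2) (by rw [abs_of_pos (by positivity)]; linarith)).2.2
  linarith

open Filter Topology in
lemma lap_nonneg_of_isLocalMax {n : ℕ} {Ω : Set (EuclideanSpace ℝ (Fin n))}
    (hΩo : IsOpen Ω) {f : EuclideanSpace ℝ (Fin n) → ℝ}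
    (hf : ContDiffOn ℝ 2 f Ω) {x : EuclideanSpace ℝ (Fin n)} (hx : x ∈ Ω)
    (hmax : IsLocalMax f x) : 0 ≤ lap f x := by
  have hdiag : ∀ i : Fin n,
      fderiv ℝ (fderiv ℝ f) x (EuclideanSpace.single i (1:ℝ)) (EuclideanSpace.single i (1:ℝ)) ≤ 0 := by
    intro i
    set e := EuclideanSpace.single i (1:ℝ) with he
    set ℓ : ℝ → EuclideanSpace ℝ (Fin n) := fun t => x + t • e with hℓ
    have hℓ0 : ℓ 0 = x := by simp [hℓ]
    have hℓd : ∀ t, HasDerivAt ℓ e t := fun t => by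
      simpa [hℓ] using ((hasDerivAt_id t).smul_const e).const_add x
    have hℓc : ContinuousAt ℓ 0 := (hℓd 0).continuousAt
    have htend : Tendsto ℓ (𝓝 0) (𝓝 x) := hℓ0 ▸ hℓc
    have hevΩ : ∀ᶠ t in 𝓝 (0:ℝ), ℓ t ∈ Ω := htend (hΩo.mem_nhds hx)
    have hf1 : ∀ y ∈ Ω, HasFDerivAt f (fderiv ℝ f y) y := fun y hy =>
      ((hf.contDiffAt (hΩo.mem_nhds hy)).differentiableAt (by norm_num)).hasFDerivAt
    have hgd : ∀ᶠ t in 𝓝 (0:ℝ), HasDerivAt (fun s => f (ℓ s)) (fderiv ℝ f (ℓ t) e) t := by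
      filter_upwards [hevΩ] with t ht
      exact (hf1 _ ht).comp_hasDerivAt t (hℓd t)
    have hf2 : DifferentiableAt ℝ (fderiv ℝ f) x := by
      have h := (hf.contDiffAt (hΩo.mem_nhds hx)).fderiv_right (m := 1) (by norm_num)
      exact h.differentiableAt (by norm_num)
    have h1 : HasDerivAt (fun t => fderiv ℝ f (ℓ t)) (fderiv ℝ (fderiv ℝ f) x e) 0 := by
      have h0 : HasFDerivAt (fderiv ℝ f) (fderiv ℝ (fderiv ℝ f) x) (ℓ 0) := hℓ0.symm ▸ hf2.hasFDerivAt
      exact h0.comp_hasDerivAt 0 (hℓd 0)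
    have hg'd : HasDerivAt (fun t => fderiv ℝ f (ℓ t) e)
        (fderiv ℝ (fderiv ℝ f) x e e) 0 := by
      have h2 := h1.clm_apply (hasDerivAt_const 0 e)
      simpa using h2
    have hgmax : IsLocalMax (fun s => f (ℓ s)) 0 := by
      have := htend.eventually hmax
      simpa [IsLocalMax, IsMaxFilter, hℓ0] using this
    exact second_deriv_nonpos_of_isLocalMax hgd hg'd hgmax
  unfold lap
  rw [neg_nonneg]
  apply Finset.sum_nonpos
  intro i _
  rw [iteratedFDeriv_two_apply]
  simpa using hdiag i

open Filter Topology in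
lemma lap_add_smul {n : ℕ} {Ω : Set (EuclideanSpace ℝ (Fin n))}
    (hΩo : IsOpen Ω) {u w : EuclideanSpace ℝ (Fin n) → ℝ} (c : ℝ)
    (hu : ContDiffOn ℝ 2 u Ω) (hw : ContDiffOn ℝ 2 w Ω)
    {x : EuclideanSpace ℝ (Fin n)} (hx : x ∈ Ω) :
    lap (fun y => u y + c * w y) x = lap u x + c * lap w x := by
  have hud : ∀ y ∈ Ω, DifferentiableAt ℝ u y := fun y hy =>
    (hu.contDiffAt (hΩo.mem_nhds hy)).differentiableAt (by norm_num)
  have hwd : ∀ y ∈ Ω, DifferentiableAt ℝ w y := fun y hy =>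
    (hw.contDiffAt (hΩo.mem_nhds hy)).differentiableAt (by norm_num)
  have hu2 : DifferentiableAt ℝ (fderiv ℝ u) x :=
    (((hu.contDiffAt (hΩo.mem_nhds hx)).fderiv_right (m := 1) (by norm_num)).differentiableAt (by norm_num))
  have hw2 : DifferentiableAt ℝ (fderiv ℝ w) x :=
    (((hw.contDiffAt (hΩo.mem_nhds hx)).fderiv_right (m := 1) (by norm_num)).differentiableAt (by norm_num))
  have hE : (fderiv ℝ (fun y => u y + c * w y)) =ᶠ[𝓝 x]
      (fun y => fderiv ℝ u y + c • fderiv ℝ w y) := by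
    filter_upwards [hΩo.mem_nhds hx] with y hy
    rw [fderiv_fun_add (hud y hy) ((hwd y hy).const_mul c), fderiv_const_mul (hwd y hy)]
  have key : fderiv ℝ (fderiv ℝ (fun y => u y + c * w y)) x
      = fderiv ℝ (fderiv ℝ u) x + c • fderiv ℝ (fderiv ℝ w) x := by
    rw [hE.fderiv_eq, fderiv_fun_add (g := fun y => c • fderiv ℝ w y) hu2 (hw2.const_smul c), fderiv_fun_const_smul hw2]
  unfold lap
  rw [mul_neg, ← neg_add, neg_inj, Finset.mul_sum, ← Finset.sum_add_distrib]
  apply Finset.sum_congr rfl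
  intro i _
  rw [iteratedFDeriv_two_apply, iteratedFDeriv_two_apply, iteratedFDeriv_two_apply, key]
  simp

open Filter Topology in
/-- lower bound `sup_Ω u ≥ ((1-α)/sup_Ω w)^(1/(N-2))` for solutions of
`Δu = u^(N-1) + εu` with `ε · sup_Ω w ≤ α`, where `Δw = 1` in `Ω`, `w = 0` on `∂Ω`. -/
theorem stmt_5 {n : ℕ} (hn : 4 ≤ n) (Ω : Set (EuclideanSpace ℝ (Fin n)))
    (hΩo : IsOpen Ω) (hΩb : Bornology.IsBounded Ω) (hΩs : HasSmoothBoundary Ω)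
    (w : EuclideanSpace ℝ (Fin n) → ℝ)
    (hw2 : ContDiffOn ℝ 2 w Ω) (hwc : ContinuousOn w (closure Ω))
    (hweq : ∀ x ∈ Ω, lap w x = 1) (hwb : ∀ x ∈ frontier Ω, w x = 0)
    (α : ℝ) (hα0 : 0 < α) (hα1 : α < 1)
    (ε : ℝ) (hε0 : 0 < ε) (hεα : ε * sSup (w '' Ω) ≤ α) :
    ∀ u : EuclideanSpace ℝ (Fin n) → ℝ,
      ContDiffOn ℝ 2 u Ω → ContinuousOn u (closure Ω) →
      (∀ x ∈ Ω, lap u x = u x ^ (2 * (n : ℝ) / ((n : ℝ) - 2) - 1) + ε * u x) →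
      (∀ x ∈ Ω, 0 < u x) → (∀ x ∈ frontier Ω, u x = 0) →
      ((1 - α) / sSup (w '' Ω)) ^ (1 / (2 * (n : ℝ) / ((n : ℝ) - 2) - 2)) ≤
        sSup (u '' Ω) := by
  intro u hu2 huc hueq hupos hub
  set N : ℝ := 2 * (n:ℝ) / ((n:ℝ) - 2) with hN
  have hn2 : (2:ℝ) < (n:ℝ) := by
    have h4 : (4:ℝ) ≤ (n:ℝ) := by exact_mod_cast hn
    linarith
  have hN2 : 0 < N - 2 := by
    have h : (0:ℝ) < (n:ℝ) - 2 := by linarith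
    rw [hN, sub_pos, lt_div_iff₀ h]; linarith
  have hN1 : 0 < N - 1 := by linarith
  rcases Ω.eq_empty_or_nonempty with hΩe | hΩne
  · rw [hΩe]
    simp only [image_empty, Real.sSup_empty, div_zero]
    rw [Real.zero_rpow (one_div_pos.mpr hN2).ne']
  · have hcl : IsCompact (closure Ω) := hΩb.isCompact_closure
    have hclne : (closure Ω).Nonempty := hΩne.closure
    have hubdd : BddAbove (u '' Ω) :=
      ((hcl.image_of_continuousOn huc).bddAbove).mono (image_mono (f := u) subset_closure)
    have hwbdd : BddAbove (w '' Ω) :=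
      ((hcl.image_of_continuousOn hwc).bddAbove).mono (image_mono (f := w) subset_closure)
    set S := sSup (w '' Ω) with hS
    set M := sSup (u '' Ω) with hM
    have hwle : ∀ x ∈ Ω, w x ≤ S := fun x hx => le_csSup hwbdd ⟨x, hx, rfl⟩
    have hule : ∀ x ∈ Ω, u x ≤ M := fun x hx => le_csSup hubdd ⟨x, hx, rfl⟩
    obtain ⟨x₁, hx₁⟩ := hΩne
    have hM0 : 0 < M := lt_of_lt_of_le (hupos x₁ hx₁) (hule x₁ hx₁)
    have key : ∀ δ : ℝ, 0 < δ → M ≤ (M ^ (N-1) + ε*M + δ) * S := by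
      intro δ hδ
      set c : ℝ := M ^ (N-1) + ε*M + δ with hc
      have hMN : 0 < M ^ (N-1) := Real.rpow_pos_of_pos hM0 _
      have hcpos : 0 < c := by rw [hc]; positivity
      set v : EuclideanSpace ℝ (Fin n) → ℝ := fun y => u y + (-c) * w y with hv
      have hvc : ContinuousOn v (closure Ω) := huc.add (continuousOn_const.mul hwc)
      obtain ⟨x₀, hx₀cl, hx₀max⟩ := hcl.exists_isMaxOn hclne hvc
      have hx0v : v x₀ ≤ 0 := by
        by_cases hin : x₀ ∈ Ω
        · exfalso
          have hloc : IsLocalMax v x₀ :=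
            hx₀max.isLocalMax (mem_of_superset (hΩo.mem_nhds hin) subset_closure)
          have hv2 : ContDiffOn ℝ 2 v Ω := hu2.add (contDiffOn_const.mul hw2)
          have h0 : 0 ≤ lap v x₀ := lap_nonneg_of_isLocalMax hΩo hv2 hin hloc
          have hlapv : lap v x₀ = lap u x₀ + (-c) * lap w x₀ :=
            lap_add_smul hΩo (-c) hu2 hw2 hin
          rw [hlapv, hueq x₀ hin, hweq x₀ hin] at h0
          have h1 : u x₀ ^ (N-1) ≤ M ^ (N-1) :=
            Real.rpow_le_rpow (hupos _ hin).le (hule _ hin) hN1.le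
          have h2 : ε * u x₀ ≤ ε * M := mul_le_mul_of_nonneg_left (hule _ hin) hε0.le
          rw [hc] at h0
          linarith
        · have hfr : x₀ ∈ frontier Ω := by
            rw [hΩo.frontier_eq]; exact ⟨hx₀cl, hin⟩
          have e1 := hub x₀ hfr
          have e2 := hwb x₀ hfr
          simp [hv, e1, e2]
      have step : ∀ x ∈ Ω, u x ≤ c * S := by
        intro x hx
        have h1 := hx₀max (subset_closure hx)
        have h2 : v x ≤ 0 := le_trans h1 hx0v
        rw [hv] at h2
        simp only at h2
        have h3 : u x ≤ c * w x := by linarith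
        exact h3.trans (mul_le_mul_of_nonneg_left (hwle x hx) hcpos.le)
      exact csSup_le ⟨u x₁, ⟨x₁, hx₁, rfl⟩⟩ (by rintro y ⟨x, hx, rfl⟩; exact step x hx)
    have hMN : 0 < M ^ (N-1) := Real.rpow_pos_of_pos hM0 _
    have hS0 : 0 < S := by
      by_contra hScon; push_neg at hScon
      have h := key 1 one_pos
      nlinarith
    have hMS : M ≤ (M ^ (N-1) + ε*M) * S := by
      by_contra h; push_neg at h
      set L : ℝ := M ^ (N-1) + ε*M with hL
      have hδ : 0 < (M - L*S)/(2*S) := div_pos (by linarith) (by positivity)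
      have h1 := key _ hδ
      have h2 : (L + (M - L*S)/(2*S)) * S = L*S + (M - L*S)/2 := by
        field_simp
      have h3 : (M ^ (N-1) + ε*M + (M - L*S)/(2*S)) * S = (L + (M - L*S)/(2*S)) * S := by
        rw [hL]
      rw [h3, h2] at h1
      nlinarith [h1, h]
    have hεMS : ε * M * S ≤ α * M := by
      have hεS : ε * S ≤ α := hεα
      nlinarith
    have hpow : M ^ (N-1) = M ^ (N-2) * M := by
      rw [show N-1 = (N-2)+1 by ring, Real.rpow_add hM0, Real.rpow_one]
    have hfinal : 1 - α ≤ M ^ (N-2) * S := by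
      have h1 : M ≤ M ^ (N-2) * M * S + ε*M*S := by
        rw [← hpow]; nlinarith
      have h2 : M ≤ M ^ (N-2) * M * S + α*M := le_trans h1 (by linarith)
      nlinarith
    have hdiv : (1-α)/S ≤ M ^ (N-2) := (div_le_iff₀ hS0).mpr hfinal
    calc ((1-α)/S) ^ (1/(N-2))
        ≤ (M ^ (N-2)) ^ (1/(N-2)) :=
          Real.rpow_le_rpow (div_nonneg (by linarith) hS0.le) hdiv (one_div_pos.mpr hN2).le
      _ = M := by
          rw [← Real.rpow_mul hM0.le, mul_one_div, div_self hN2.ne', Real.rpow_one]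
end

section
/- Let n ≥ 3, N = 2n/(n-2), Ω a smooth bounded open set of ℝⁿ, y₀ ∈ Ω, μ > 0 with B(y₀, μ) compactly contained in Ω, and let η be a smooth cutoff function with 0 ≤ η ≤ 1, η ≡ 1 on B(y₀, μ/2) and η ≡ 0 outside B(y₀, 2μ/3). Then for every k > 1, every ε ∈ (0, 2/(n-2)], and every solution u of Δu = u^{N-1-ε} in Ω with u > 0 in Ω and u = 0 on ∂Ω, one has, with B₀ = B(y₀, 2μ/3): ((2k−1)/k²) · ‖∇(η u^k)‖²_{L²(B₀)} ≤ ‖u‖^{N−ε−2}_{L^{N−ε}(B₀)} · ‖η u^k‖²_{L^{N−ε}(B₀)} + C(k, η) · ‖u‖^{2k}_{L^{2k}(B₀)}, where C(k, η) = ((2k−2)/(4k²))·‖Δη²‖_∞ + ((2k−1)/k²)·‖∇η‖²_∞ is a constant depending only on k and η. -/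
open MeasureTheory Metric Set

namespace Stmt9Aux

variable {n : ℕ}

lemma clm_norm_sq (L : EuclideanSpace ℝ (Fin n) →L[ℝ] ℝ) :
    ‖L‖ ^ 2 = ∑ i : Fin n, (L (EuclideanSpace.single i 1)) ^ 2 := by
  set z := (InnerProductSpace.toDual ℝ (EuclideanSpace ℝ (Fin n))).symm L with hz
  have hnorm : ‖L‖ = ‖z‖ := ((InnerProductSpace.toDual ℝ _).symm.norm_map L).symm
  have happ : ∀ i : Fin n, L (EuclideanSpace.single i 1) = z i := by
    intro i
    have h := InnerProductSpace.toDual_symm_apply (𝕜 := ℝ)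
      (E := EuclideanSpace ℝ (Fin n)) (x := EuclideanSpace.single i (1 : ℝ)) (y := L)
    rw [← hz] at h
    rw [← h, EuclideanSpace.inner_single_right]
    simp
  have hns : ‖z‖ ^ 2 = ∑ i, ‖z i‖ ^ 2 := by
    rw [EuclideanSpace.norm_eq, Real.sq_sqrt (by positivity)]
  rw [hnorm, hns]
  exact Finset.sum_congr rfl fun i _ => by
    rw [happ i, Real.norm_eq_abs, sq_abs]

lemma contDiff_glue {m : WithTop ℕ∞} {F : EuclideanSpace ℝ (Fin n) → ℝ}
    {O C : Set (EuclideanSpace ℝ (Fin n))}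
    (hO : IsOpen O) (hC : IsClosed C) (hCO : C ⊆ O)
    (h1 : ContDiffOn ℝ m F O) (h0 : ∀ x ∉ C, F x = 0) : ContDiff ℝ m F := by
  rw [contDiff_iff_contDiffAt]
  intro x
  by_cases hx : x ∈ O
  · exact h1.contDiffAt (hO.mem_nhds hx)
  · have hxC : x ∈ Cᶜ := fun h => hx (hCO h)
    have hev : (fun _ => (0 : ℝ)) =ᶠ[nhds x] F := by
      filter_upwards [hC.isOpen_compl.mem_nhds hxC] with y hy
      exact (h0 y hy).symm
    exact (contDiffAt_const (c := (0 : ℝ))).congr_of_eventuallyEq hev.symm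

lemma fderiv_zero_off {F : Type*} [NormedAddCommGroup F] [NormedSpace ℝ F]
    {f : EuclideanSpace ℝ (Fin n) → F} {s : Set (EuclideanSpace ℝ (Fin n))}
    (hs : IsClosed s) (h : ∀ y ∉ s, f y = 0) : ∀ x ∉ s, fderiv ℝ f x = 0 := by
  intro x hx
  have hev : f =ᶠ[nhds x] (fun _ => (0 : F)) := by
    filter_upwards [hs.isOpen_compl.mem_nhds hx] with y hy
    exact h y hy
  rw [hev.fderiv_eq]
  exact fderiv_const_apply 0

lemma integral_eq_setIntegral_ball {f : EuclideanSpace ℝ (Fin n) → ℝ}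
    {y₀ : EuclideanSpace ℝ (Fin n)} {r : ℝ} (hr : r ≠ 0)
    (hf : ∀ x ∉ closedBall y₀ r, f x = 0) :
    ∫ x, f x = ∫ x in ball y₀ r, f x := by
  have h1 : ∫ x in closedBall y₀ r, f x = ∫ x, f x :=
    setIntegral_eq_integral_of_forall_compl_eq_zero hf
  have h2 : (closedBall y₀ r : Set (EuclideanSpace ℝ (Fin n))) =ᵐ[volume] ball y₀ r := by
    rw [MeasureTheory.ae_eq_set]
    constructor
    · rw [Metric.closedBall_diff_ball]
      exact MeasureTheory.Measure.addHaar_sphere_of_ne_zero _ _ hr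
    · have : (ball y₀ r \ closedBall y₀ r : Set (EuclideanSpace ℝ (Fin n))) = ∅ := by
        rw [diff_eq_empty]; exact ball_subset_closedBall
      simp [this]
  rw [← h1, setIntegral_congr_set h2]

lemma ibp (f g : EuclideanSpace ℝ (Fin n) → ℝ)
    (hf1 : ContDiff ℝ 1 f) (hfc : HasCompactSupport f)
    (hg1 : ContDiff ℝ 1 g) (hgc : HasCompactSupport g) (v : EuclideanSpace ℝ (Fin n)) :
    ∫ x, fderiv ℝ f x v * g x = - ∫ x, fderiv ℝ g x v * f x := by
  obtain ⟨C, hC⟩ := hf1.lipschitzWith_of_hasCompactSupport hfc one_ne_zero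
  obtain ⟨D, hD⟩ := hg1.lipschitzWith_of_hasCompactSupport hgc one_ne_zero
  have key := LipschitzWith.integral_lineDeriv_mul_eq (μ := volume) hC hD hgc v
  have h1 : ∀ x, lineDeriv ℝ f x v = fderiv ℝ f x v := fun x =>
    ((hf1.differentiable one_ne_zero) x).lineDeriv_eq_fderiv
  have h2 : ∀ x, lineDeriv ℝ g x (-v) = -(fderiv ℝ g x v) := fun x => by
    rw [((hg1.differentiable one_ne_zero) x).lineDeriv_eq_fderiv, map_neg]
  simp only [h1, h2, neg_mul] at key
  rw [key, integral_neg]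

end Stmt9Aux

set_option maxHeartbeats 2000000 in
/-- the key Moser-iteration estimate: with `B₀ = B(y₀, 2μ/3)` and a cutoff
`η` (`η ≡ 1` on `B(y₀, μ/2)`, `η ≡ 0` outside `B₀`),
`((2k-1)/k²)‖∇(η uᵏ)‖²_{L²(B₀)} ≤ ‖u‖^{N-ε-2}_{L^{N-ε}(B₀)} ‖η uᵏ‖²_{L^{N-ε}(B₀)}
  + C(k,η)‖u‖^{2k}_{L^{2k}(B₀)}`,
where `C(k,η) = ((2k-2)/(4k²))‖Δ(η²)‖_∞ + ((2k-1)/k²)‖∇η‖²_∞`. -/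
theorem stmt_9 {n : ℕ} (hn : 3 ≤ n) (Ω : Set (EuclideanSpace ℝ (Fin n)))
    (hΩo : IsOpen Ω) (hΩb : Bornology.IsBounded Ω) (hΩs : HasSmoothBoundary Ω)
    (y₀ : EuclideanSpace ℝ (Fin n)) (μ : ℝ) (hμ : 0 < μ)
    (hball : closedBall y₀ μ ⊆ Ω)
    (η : EuclideanSpace ℝ (Fin n) → ℝ) (hηs : ContDiff ℝ (⊤ : ℕ∞) η)
    (hη0 : ∀ x, 0 ≤ η x) (hη1 : ∀ x, η x ≤ 1)
    (hηin : ∀ x ∈ ball y₀ (μ / 2), η x = 1)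
    (hηout : ∀ x ∉ ball y₀ (2 * μ / 3), η x = 0)
    (k : ℝ) (hk : 1 < k) (ε : ℝ) (hε0 : 0 < ε) (hε : ε ≤ 2 / ((n : ℝ) - 2))
    (u : EuclideanSpace ℝ (Fin n) → ℝ)
    (hu : IsSolution Ω u (2 * (n : ℝ) / ((n : ℝ) - 2) - 1 - ε)) :
    (2 * k - 1) / k ^ 2 *
        ∫ x in ball y₀ (2 * μ / 3), ‖fderiv ℝ (fun y => η y * u y ^ k) x‖ ^ 2 ≤
      (∫ x in ball y₀ (2 * μ / 3), u x ^ (2 * (n : ℝ) / ((n : ℝ) - 2) - ε)) ^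
          ((2 * (n : ℝ) / ((n : ℝ) - 2) - ε - 2) / (2 * (n : ℝ) / ((n : ℝ) - 2) - ε)) *
        (∫ x in ball y₀ (2 * μ / 3),
            (η x * u x ^ k) ^ (2 * (n : ℝ) / ((n : ℝ) - 2) - ε)) ^
          (2 / (2 * (n : ℝ) / ((n : ℝ) - 2) - ε)) +
      ((2 * k - 2) / (4 * k ^ 2) * (⨆ x, |lap (fun y => η y ^ 2) x|) +
          (2 * k - 1) / k ^ 2 * (⨆ x, ‖fderiv ℝ η x‖) ^ 2) *
        ∫ x in ball y₀ (2 * μ / 3), u x ^ (2 * k) := by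
  classical
  obtain ⟨hC2, hucont, hueq, hpos, hubd⟩ := hu
  -- numeric facts
  have hn3 : (3 : ℝ) ≤ (n : ℝ) := by exact_mod_cast hn
  have hn2 : (0 : ℝ) < (n : ℝ) - 2 := by linarith
  have hk0 : (0 : ℝ) < k := lt_trans one_pos hk
  set N' : ℝ := 2 * (n : ℝ) / ((n : ℝ) - 2) - ε with hN'def
  have hεd : ε * ((n : ℝ) - 2) ≤ 2 := (le_div_iff₀ hn2).1 hε
  have hNd : 2 + ε < 2 * (n : ℝ) / ((n : ℝ) - 2) := by
    rw [lt_div_iff₀ hn2]; nlinarith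
  have hN2 : 2 < N' := by rw [hN'def]; linarith
  have hN0 : 0 < N' := by linarith
  -- geometry
  have hr0 : (0 : ℝ) < 2 * μ / 3 := by linarith
  have hr5 : 2 * μ / 3 < 5 * μ / 6 := by linarith
  have h5μ : 5 * μ / 6 < μ := by linarith
  have hcbΩ : closedBall y₀ (2 * μ / 3) ⊆ Ω :=
    (closedBall_subset_closedBall (by linarith)).trans hball
  have hB₀Ω : ball y₀ (2 * μ / 3) ⊆ Ω := ball_subset_closedBall.trans hcbΩ
  have hB₀5 : ball y₀ (2 * μ / 3) ⊆ ball y₀ (5 * μ / 6) := ball_subset_ball (le_of_lt hr5)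
  -- the middle cutoff θ
  set θb : ContDiffBump y₀ := ⟨5 * μ / 6, μ, by linarith, h5μ⟩ with hθb
  set θ : EuclideanSpace ℝ (Fin n) → ℝ := fun x => θb x with hθdef
  have hθ1 : ∀ x ∈ ball y₀ (5 * μ / 6), θ x = 1 := fun x hx =>
    θb.one_of_mem_closedBall (ball_subset_closedBall hx)
  have hθ0 : ∀ x ∉ closedBall y₀ μ, θ x = 0 := by
    intro x hx
    exact θb.zero_of_le_dist (le_of_not_gt fun h => hx (le_of_lt h))
  have hθs1 : ContDiff ℝ 1 θ := θb.contDiff.of_le (by exact WithTop.coe_le_coe.2 le_top)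
  -- η facts
  have hηs1 : ContDiff ℝ 1 η := hηs.of_le (by exact WithTop.coe_le_coe.2 le_top)
  have hηs2 : ContDiff ℝ 2 η := hηs.of_le (by exact WithTop.coe_le_coe.2 le_top)
  have hηcb : ∀ x ∉ closedBall y₀ (2 * μ / 3), η x = 0 := fun x hx =>
    hηout x fun h => hx (ball_subset_closedBall h)
  have hηfd : ∀ x, HasFDerivAt η (fderiv ℝ η x) x := fun x =>
    (hηs1.differentiable one_ne_zero x).hasFDerivAt
  have hη2fd : ∀ x, HasFDerivAt (fun y => η y ^ 2) ((2 * η x) • fderiv ℝ η x) x := by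
    intro x
    have h := (hηfd x).mul (hηfd x)
    have h2 : (η * η) = fun y => η y ^ 2 := funext fun y => (pow_two (η y)).symm
    rw [h2] at h
    rw [two_mul, add_smul]
    exact h
  -- u facts
  have huC2at : ∀ x ∈ Ω, ContDiffAt ℝ 2 u x := fun x hx => hC2.contDiffAt (hΩo.mem_nhds hx)
  have hud : ∀ x ∈ Ω, DifferentiableAt ℝ u x := fun x hx =>
    (huC2at x hx).differentiableAt two_ne_zero
  have hufd : ∀ x ∈ Ω, HasFDerivAt u (fderiv ℝ u x) x := fun x hx => (hud x hx).hasFDerivAt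
  have hurfd : ∀ (c : ℝ), ∀ x ∈ Ω,
      HasFDerivAt (fun y => u y ^ c) ((c * u x ^ (c - 1)) • fderiv ℝ u x) x :=
    fun c x hx => (hufd x hx).rpow_const (Or.inl (hpos x hx).ne')
  have hCOrpow : ∀ c : ℝ, ContDiffOn ℝ 1 (fun y => u y ^ c) Ω := by
    intro c x hx
    exact (((huC2at x hx).of_le one_le_two).rpow_const_of_ne (hpos x hx).ne').contDiffWithinAt
  have hdu1 : ∀ x ∈ Ω, ContDiffAt ℝ 1 (fderiv ℝ u) x := fun x hx =>
    (huC2at x hx).fderiv_right (by norm_num)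
  have hfdfdat : ∀ x ∈ Ω, HasFDerivAt (fderiv ℝ u) (fderiv ℝ (fderiv ℝ u) x) x :=
    fun x hx => ((hdu1 x hx).differentiableAt one_ne_zero).hasFDerivAt
  set e : Fin n → EuclideanSpace ℝ (Fin n) := fun i => EuclideanSpace.single i (1 : ℝ) with he
  -- partial derivative of a partial derivative
  have hpd2 : ∀ (f : EuclideanSpace ℝ (Fin n) → ℝ) (x : EuclideanSpace ℝ (Fin n)) (i : Fin n),
      HasFDerivAt (fderiv ℝ f) (fderiv ℝ (fderiv ℝ f) x) x →
      fderiv ℝ (fun y => fderiv ℝ f y (e i)) x (e i) = fderiv ℝ (fderiv ℝ f) x (e i) (e i) := by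
    intro f x i hf
    have hfd : HasFDerivAt (fun y => fderiv ℝ f y (e i))
        ((fderiv ℝ f x).comp (0 : EuclideanSpace ℝ (Fin n) →L[ℝ] EuclideanSpace ℝ (Fin n)) +
          (fderiv ℝ (fderiv ℝ f) x).flip (e i)) x :=
      hf.clm_apply (hasFDerivAt_const (e i) x)
    rw [hfd.fderiv]
    simp [ContinuousLinearMap.flip_apply]
  -- lap of u in coordinates
  have hlapu : ∀ x ∈ Ω, ∑ i, fderiv ℝ (fderiv ℝ u) x (e i) (e i) =
      -(u x ^ (2 * (n : ℝ) / ((n : ℝ) - 2) - 1 - ε)) := by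
    intro x hx
    have h := hueq x hx
    unfold lap at h
    simp only [iteratedFDeriv_two_apply, Matrix.cons_val_zero, Matrix.cons_val_one,
      Matrix.head_cons] at h
    rw [he]
    linarith
  -- lap of η² in coordinates
  have hlapη : ∀ x, lap (fun y => η y ^ 2) x =
      -∑ i, fderiv ℝ (fderiv ℝ (fun y => η y ^ 2)) x (e i) (e i) := by
    intro x
    unfold lap
    simp only [iteratedFDeriv_two_apply, Matrix.cons_val_zero, Matrix.cons_val_one,
      Matrix.head_cons]
    rfl
  -- cutoff-multiplied globally C¹ functions
  set Φ : EuclideanSpace ℝ (Fin n) → ℝ := fun x => η x ^ 2 * u x ^ (2 * k - 1) with hΦdef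
  set W : EuclideanSpace ℝ (Fin n) → ℝ := fun x => θ x * u x ^ (2 * k) with hWdef
  set U : Fin n → EuclideanSpace ℝ (Fin n) → ℝ :=
    fun i x => θ x * fderiv ℝ u x (e i) with hUdef
  set G : Fin n → EuclideanSpace ℝ (Fin n) → ℝ :=
    fun i x => fderiv ℝ (fun y => η y ^ 2) x (e i) with hGdef
  -- supports
  have hΦoff : ∀ x ∉ closedBall y₀ (2 * μ / 3), Φ x = 0 := by
    intro x hx; simp [hΦdef, hηcb x hx]
  have hWoff : ∀ x ∉ closedBall y₀ μ, W x = 0 := by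
    intro x hx; simp [hWdef, hθ0 x hx]
  have hUoff : ∀ i, ∀ x ∉ closedBall y₀ μ, U i x = 0 := by
    intro i x hx; simp [hUdef, hθ0 x hx]
  have hη2off : ∀ x ∉ closedBall y₀ (2 * μ / 3), (fun y => η y ^ 2) x = 0 := by
    intro x hx; simp [hηcb x hx]
  have hGoff : ∀ i, ∀ x ∉ closedBall y₀ (2 * μ / 3), G i x = 0 := by
    intro i x hx
    simp [hGdef, Stmt9Aux.fderiv_zero_off isClosed_closedBall hη2off x hx]
  have hΦfdoff : ∀ x ∉ closedBall y₀ (2 * μ / 3), fderiv ℝ Φ x = 0 :=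
    Stmt9Aux.fderiv_zero_off isClosed_closedBall hΦoff
  have hGfdoff : ∀ i, ∀ x ∉ closedBall y₀ (2 * μ / 3), fderiv ℝ (G i) x = 0 := fun i =>
    Stmt9Aux.fderiv_zero_off isClosed_closedBall (hGoff i)
  -- smoothness (C¹) of the global functions
  have hfdu1 : ContDiffOn ℝ 1 (fderiv ℝ u) Ω := hC2.fderiv_of_isOpen hΩo (by norm_num)
  have hΦ1 : ContDiff ℝ 1 Φ :=
    Stmt9Aux.contDiff_glue hΩo isClosed_closedBall hcbΩ
      (((hηs1.pow 2).contDiffOn).mul (hCOrpow (2 * k - 1))) hΦoff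
  have hW1 : ContDiff ℝ 1 W :=
    Stmt9Aux.contDiff_glue hΩo isClosed_closedBall hball
      ((hθs1.contDiffOn).mul (hCOrpow (2 * k))) hWoff
  have hU1 : ∀ i, ContDiff ℝ 1 (U i) := fun i =>
    Stmt9Aux.contDiff_glue hΩo isClosed_closedBall hball
      ((hθs1.contDiffOn).mul (hfdu1.clm_apply contDiffOn_const)) (hUoff i)
  have hη2C2 : ContDiff ℝ 2 (fun y => η y ^ 2) := hηs2.pow 2
  have hG1 : ∀ i, ContDiff ℝ 1 (G i) := fun i =>
    ((hη2C2.fderiv_right (by norm_num)).clm_apply contDiff_const)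
  -- compact supports
  have hΦc : HasCompactSupport Φ :=
    HasCompactSupport.intro (isCompact_closedBall y₀ (2 * μ / 3)) hΦoff
  have hWc : HasCompactSupport W :=
    HasCompactSupport.intro (isCompact_closedBall y₀ μ) hWoff
  have hUc : ∀ i, HasCompactSupport (U i) := fun i =>
    HasCompactSupport.intro (isCompact_closedBall y₀ μ) (hUoff i)
  have hGc : ∀ i, HasCompactSupport (G i) := fun i =>
    HasCompactSupport.intro (isCompact_closedBall y₀ (2 * μ / 3)) (hGoff i)
  -- continuity on Ω of integrands
  have hcu : ContinuousOn u Ω := hC2.continuousOn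
  have hcup : ∀ c : ℝ, ContinuousOn (fun x => u x ^ c) Ω := fun c =>
    hcu.rpow_const fun x hx => Or.inl (hpos x hx).ne'
  have hcfdu : ContinuousOn (fderiv ℝ u) Ω := hC2.continuousOn_fderiv_of_isOpen hΩo (by norm_num)
  have hcdui : ∀ i, ContinuousOn (fun x => fderiv ℝ u x (e i)) Ω := fun i =>
    (ContinuousLinearMap.apply ℝ ℝ (e i)).continuous.comp_continuousOn hcfdu
  have hcfd2 : ContinuousOn (fderiv ℝ (fderiv ℝ u)) Ω :=
    hfdu1.continuousOn_fderiv_of_isOpen hΩo le_rfl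
  have hcH : ∀ i, ContinuousOn (fun x => fderiv ℝ (fderiv ℝ u) x (e i) (e i)) Ω := fun i =>
    (ContinuousLinearMap.apply ℝ ℝ (e i)).continuous.comp_continuousOn
      ((ContinuousLinearMap.apply ℝ (EuclideanSpace ℝ (Fin n) →L[ℝ] ℝ)
        (e i)).continuous.comp_continuousOn hcfd2)
  have hcη : Continuous η := hηs1.continuous
  have hcdη : Continuous (fderiv ℝ η) := hηs2.continuous_fderiv (by norm_num)
  have hcdηi : ∀ i, Continuous fun x => fderiv ℝ η x (e i) := fun i =>
    (ContinuousLinearMap.apply ℝ ℝ (e i)).continuous.comp hcdη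
  have hcd2η : Continuous (fderiv ℝ (fderiv ℝ (fun y => η y ^ 2))) :=
    (hη2C2.fderiv_right (by norm_num)).continuous_fderiv one_ne_zero
  have hcKi : ∀ i, Continuous fun x =>
      fderiv ℝ (fderiv ℝ (fun y => η y ^ 2)) x (e i) (e i) := fun i =>
    (ContinuousLinearMap.apply ℝ ℝ (e i)).continuous.comp
      ((ContinuousLinearMap.apply ℝ (EuclideanSpace ℝ (Fin n) →L[ℝ] ℝ)
        (e i)).continuous.comp hcd2η)
  have hclap : Continuous (lap (fun y => η y ^ 2)) := by
    have hfe : lap (fun y => η y ^ 2) =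
        fun x => -∑ i, fderiv ℝ (fderiv ℝ (fun y => η y ^ 2)) x (e i) (e i) :=
      funext hlapη
    rw [hfe]
    exact (continuous_finset_sum _ fun i _ => hcKi i).neg
  -- integrability factory
  have hIntOn : ∀ f : EuclideanSpace ℝ (Fin n) → ℝ, ContinuousOn f Ω →
      IntegrableOn f (ball y₀ (2 * μ / 3)) volume := fun f hf =>
    ((hf.mono hcbΩ).integrableOn_compact (isCompact_closedBall _ _)).mono_set
      ball_subset_closedBall
  -- derivative formulas
  have hdΦ : ∀ x ∈ Ω, ∀ i, fderiv ℝ Φ x (e i) =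
      η x ^ 2 * ((2 * k - 1) * u x ^ (2 * k - 2) * fderiv ℝ u x (e i))
        + u x ^ (2 * k - 1) * (2 * η x * fderiv ℝ η x (e i)) := by
    intro x hx i
    have hΦhas : HasFDerivAt Φ
        ((η x ^ 2) • (((2 * k - 1) * u x ^ (2 * k - 1 - 1)) • fderiv ℝ u x)
          + (u x ^ (2 * k - 1)) • ((2 * η x) • fderiv ℝ η x)) x :=
      (hη2fd x).mul (hurfd (2 * k - 1) x hx)
    rw [hΦhas.fderiv]
    simp only [ContinuousLinearMap.add_apply, ContinuousLinearMap.coe_smul',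
      Pi.smul_apply, smul_eq_mul]
    rw [show (2 * k - 1 - 1 : ℝ) = 2 * k - 2 by ring]
  -- IBP identity A (tested against U i and Φ)
  have ibpA : ∀ i, ∫ x in ball y₀ (2 * μ / 3),
        (fderiv ℝ (fderiv ℝ u) x (e i) (e i)) * Φ x
      = - ∫ x in ball y₀ (2 * μ / 3), (fderiv ℝ Φ x (e i)) * (fderiv ℝ u x (e i)) := by
    intro i
    have h := Stmt9Aux.ibp (U i) Φ (hU1 i) (hUc i) hΦ1 hΦc (e i)
    have hL : ∫ x, fderiv ℝ (U i) x (e i) * Φ x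
        = ∫ x in ball y₀ (2 * μ / 3), (fderiv ℝ (fderiv ℝ u) x (e i) (e i)) * Φ x := by
      rw [Stmt9Aux.integral_eq_setIntegral_ball hr0.ne'
        (fun x hx => by rw [hΦoff x hx, mul_zero])]
      refine setIntegral_congr_fun measurableSet_ball (fun x hx => ?_)
      have hxΩ : x ∈ Ω := hB₀Ω hx
      have hfe : U i =ᶠ[nhds x] fun y => fderiv ℝ u y (e i) := by
        filter_upwards [isOpen_ball.mem_nhds (hB₀5 hx)] with y hy
        simp [hUdef, hθ1 y hy]
      rw [hfe.fderiv_eq, hpd2 u x i (hfdfdat x hxΩ)]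
    have hR : ∫ x, fderiv ℝ Φ x (e i) * U i x
        = ∫ x in ball y₀ (2 * μ / 3), (fderiv ℝ Φ x (e i)) * (fderiv ℝ u x (e i)) := by
      rw [Stmt9Aux.integral_eq_setIntegral_ball hr0.ne'
        (fun x hx => by rw [hΦfdoff x hx]; simp)]
      refine setIntegral_congr_fun measurableSet_ball (fun x hx => ?_)
      simp [hUdef, hθ1 x (hB₀5 hx)]
    rw [hL, hR] at h
    exact h
  -- sum the IBP identities : E1
  have hTL : ∫ x in ball y₀ (2 * μ / 3),
        (∑ i, (fderiv ℝ (fderiv ℝ u) x (e i) (e i)) * Φ x)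
      = - ∫ x in ball y₀ (2 * μ / 3), η x ^ 2 * u x ^ (N' + 2 * k - 2) := by
    rw [← integral_neg]
    refine setIntegral_congr_fun measurableSet_ball (fun x hx => ?_)
    have hxΩ := hB₀Ω hx
    rw [← Finset.sum_mul, hlapu x hxΩ]
    simp only [hΦdef]
    rw [show N' + 2 * k - 2 = (2 * (n : ℝ) / ((n : ℝ) - 2) - 1 - ε) + (2 * k - 1) by
      rw [hN'def]; ring, Real.rpow_add (hpos x hxΩ)]
    ring
  have hTR : ∑ i, - ∫ x in ball y₀ (2 * μ / 3), (fderiv ℝ Φ x (e i)) * (fderiv ℝ u x (e i))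
      = - ∫ x in ball y₀ (2 * μ / 3),
          ((2 * k - 1) * (η x ^ 2 * u x ^ (2 * k - 2) * ∑ i, (fderiv ℝ u x (e i)) ^ 2)
            + 2 * (η x * u x ^ (2 * k - 1) *
              ∑ i, fderiv ℝ η x (e i) * fderiv ℝ u x (e i))) := by
    rw [Finset.sum_neg_distrib]
    congr 1
    rw [← integral_finset_sum _ (fun i _ => by
      have : ContinuousOn (fun x => (fderiv ℝ Φ x (e i)) * (fderiv ℝ u x (e i))) Ω :=
        ((ContinuousLinearMap.apply ℝ ℝ (e i)).continuous.comp_continuousOn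
          (hΦ1.contDiffOn.continuousOn_fderiv_of_isOpen hΩo le_rfl)).mul (hcdui i)
      exact hIntOn _ this)]
    refine setIntegral_congr_fun measurableSet_ball (fun x hx => ?_)
    have hxΩ := hB₀Ω hx
    calc ∑ i, fderiv ℝ Φ x (e i) * fderiv ℝ u x (e i)
        = ∑ i, ((2 * k - 1) * (η x ^ 2 * u x ^ (2 * k - 2) * (fderiv ℝ u x (e i)) ^ 2)
              + 2 * (η x * u x ^ (2 * k - 1) *
                (fderiv ℝ η x (e i) * fderiv ℝ u x (e i)))) :=
          Finset.sum_congr rfl fun i _ => by rw [hdΦ x hxΩ i]; ring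
      _ = (2 * k - 1) * (η x ^ 2 * u x ^ (2 * k - 2) * ∑ i, (fderiv ℝ u x (e i)) ^ 2)
            + 2 * (η x * u x ^ (2 * k - 1) *
              ∑ i, fderiv ℝ η x (e i) * fderiv ℝ u x (e i)) := by
          rw [Finset.sum_add_distrib]
          simp only [Finset.mul_sum]
  have E1 : ∫ x in ball y₀ (2 * μ / 3), η x ^ 2 * u x ^ (N' + 2 * k - 2)
      = ∫ x in ball y₀ (2 * μ / 3),
          ((2 * k - 1) * (η x ^ 2 * u x ^ (2 * k - 2) * ∑ i, (fderiv ℝ u x (e i)) ^ 2)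
            + 2 * (η x * u x ^ (2 * k - 1) *
              ∑ i, fderiv ℝ η x (e i) * fderiv ℝ u x (e i))) := by
    have hs : ∑ i, ∫ x in ball y₀ (2 * μ / 3),
          (fderiv ℝ (fderiv ℝ u) x (e i) (e i)) * Φ x
        = ∑ i, - ∫ x in ball y₀ (2 * μ / 3),
            (fderiv ℝ Φ x (e i)) * (fderiv ℝ u x (e i)) :=
      Finset.sum_congr rfl fun i _ => ibpA i
    rw [← integral_finset_sum _ (f := fun i x => fderiv ℝ (fderiv ℝ u) x (e i) (e i) * Φ x) (fun i _ =>
      hIntOn _ ((hcH i).mul hΦ1.continuous.continuousOn)), hTL, hTR] at hs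
    exact neg_injective hs
  -- IBP identity B (tested against W and G i)
  have ibpB : ∀ i, ∫ x in ball y₀ (2 * μ / 3),
        (2 * k * u x ^ (2 * k - 1) * fderiv ℝ u x (e i)) * (2 * η x * fderiv ℝ η x (e i))
      = - ∫ x in ball y₀ (2 * μ / 3),
          (fderiv ℝ (fderiv ℝ (fun y => η y ^ 2)) x (e i) (e i)) * u x ^ (2 * k) := by
    intro i
    have h := Stmt9Aux.ibp W (G i) hW1 hWc (hG1 i) (hGc i) (e i)
    have hL : ∫ x, fderiv ℝ W x (e i) * G i x
        = ∫ x in ball y₀ (2 * μ / 3),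
            (2 * k * u x ^ (2 * k - 1) * fderiv ℝ u x (e i))
              * (2 * η x * fderiv ℝ η x (e i)) := by
      rw [Stmt9Aux.integral_eq_setIntegral_ball hr0.ne'
        (fun x hx => by rw [hGoff i x hx, mul_zero])]
      refine setIntegral_congr_fun measurableSet_ball (fun x hx => ?_)
      have hxΩ := hB₀Ω hx
      have hfe : W =ᶠ[nhds x] fun y => u y ^ (2 * k) := by
        filter_upwards [isOpen_ball.mem_nhds (hB₀5 hx)] with y hy
        simp [hWdef, hθ1 y hy]
      rw [hfe.fderiv_eq, (hurfd (2 * k) x hxΩ).fderiv]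
      simp only [hGdef, (hη2fd x).fderiv]
      simp only [ContinuousLinearMap.coe_smul', Pi.smul_apply, smul_eq_mul]
      try ring
    have hR : ∫ x, fderiv ℝ (G i) x (e i) * W x
        = ∫ x in ball y₀ (2 * μ / 3),
            (fderiv ℝ (fderiv ℝ (fun y => η y ^ 2)) x (e i) (e i)) * u x ^ (2 * k) := by
      rw [Stmt9Aux.integral_eq_setIntegral_ball hr0.ne'
        (fun x hx => by rw [hGfdoff i x hx]; simp)]
      refine setIntegral_congr_fun measurableSet_ball (fun x hx => ?_)
      have h2 : HasFDerivAt (fderiv ℝ (fun y => η y ^ 2))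
          (fderiv ℝ (fderiv ℝ (fun y => η y ^ 2)) x) x :=
        (((hη2C2.fderiv_right (by norm_num)).differentiable one_ne_zero) x).hasFDerivAt
      simp only [hGdef]
      rw [hpd2 (fun y => η y ^ 2) x i h2]
      simp [hWdef, hθ1 x (hB₀5 hx)]
    rw [hL, hR] at h
    exact h
  -- summed : E2
  have E2 : ∫ x in ball y₀ (2 * μ / 3),
        (4 * k) * (η x * u x ^ (2 * k - 1) *
          ∑ i, fderiv ℝ η x (e i) * fderiv ℝ u x (e i))
      = ∫ x in ball y₀ (2 * μ / 3), lap (fun y => η y ^ 2) x * u x ^ (2 * k) := by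
    have hs : ∑ i, ∫ x in ball y₀ (2 * μ / 3),
          (2 * k * u x ^ (2 * k - 1) * fderiv ℝ u x (e i))
            * (2 * η x * fderiv ℝ η x (e i))
        = ∑ i, - ∫ x in ball y₀ (2 * μ / 3),
            (fderiv ℝ (fderiv ℝ (fun y => η y ^ 2)) x (e i) (e i)) * u x ^ (2 * k) :=
      Finset.sum_congr rfl fun i _ => ibpB i
    have hintL : ∀ i : Fin n, IntegrableOn
        (fun x => (2 * k * u x ^ (2 * k - 1) * fderiv ℝ u x (e i))
          * (2 * η x * fderiv ℝ η x (e i))) (ball y₀ (2 * μ / 3)) volume := fun i =>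
      hIntOn _ (((continuousOn_const.mul (hcup (2 * k - 1))).mul (hcdui i)).mul
        ((continuousOn_const.mul hcη.continuousOn).mul ((hcdηi i).continuousOn)))
    rw [← integral_finset_sum _ (fun i _ => hintL i)] at hs
    have hL2 : ∫ x in ball y₀ (2 * μ / 3),
        (∑ i, (2 * k * u x ^ (2 * k - 1) * fderiv ℝ u x (e i))
          * (2 * η x * fderiv ℝ η x (e i)))
        = ∫ x in ball y₀ (2 * μ / 3),
            (4 * k) * (η x * u x ^ (2 * k - 1) *
              ∑ i, fderiv ℝ η x (e i) * fderiv ℝ u x (e i)) := by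
      refine setIntegral_congr_fun measurableSet_ball (fun x hx => ?_)
      rw [show (4 * k) * (η x * u x ^ (2 * k - 1) *
          ∑ i, fderiv ℝ η x (e i) * fderiv ℝ u x (e i))
          = ∑ i, (4 * k) * (η x * u x ^ (2 * k - 1) *
              (fderiv ℝ η x (e i) * fderiv ℝ u x (e i))) by
        rw [Finset.mul_sum, Finset.mul_sum]]
      exact Finset.sum_congr rfl fun i _ => by ring
    have hR2 : ∑ i, - ∫ x in ball y₀ (2 * μ / 3),
          (fderiv ℝ (fderiv ℝ (fun y => η y ^ 2)) x (e i) (e i)) * u x ^ (2 * k)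
        = ∫ x in ball y₀ (2 * μ / 3), lap (fun y => η y ^ 2) x * u x ^ (2 * k) := by
      rw [Finset.sum_neg_distrib,
        ← integral_finset_sum _
          (f := fun i x => fderiv ℝ (fderiv ℝ (fun y => η y ^ 2)) x (e i) (e i) * u x ^ (2 * k))
          (fun i _ =>
          hIntOn _ (((hcKi i).continuousOn).mul (hcup (2 * k)))),
        ← integral_neg]
      refine setIntegral_congr_fun measurableSet_ball (fun x hx => ?_)
      rw [← Finset.sum_mul, hlapη x]
      ring
    rw [hL2, hR2] at hs
    exact hs
  -- continuity of the sums
  have hcS₂ : ContinuousOn (fun x => ∑ i, (fderiv ℝ u x (e i)) ^ 2) Ω :=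
    continuousOn_finset_sum _ fun i _ => (hcdui i).pow 2
  have hcS₁ : ContinuousOn (fun x => ∑ i, fderiv ℝ η x (e i) * fderiv ℝ u x (e i)) Ω :=
    continuousOn_finset_sum _ fun i _ => ((hcdηi i).continuousOn).mul (hcdui i)
  have hcS₃ : Continuous (fun x => ∑ i, (fderiv ℝ η x (e i)) ^ 2) :=
    continuous_finset_sum _ fun i _ => (hcdηi i).pow 2
  have hintA : IntegrableOn
      (fun x => η x ^ 2 * u x ^ (2 * k - 2) * ∑ i, (fderiv ℝ u x (e i)) ^ 2)
      (ball y₀ (2 * μ / 3)) volume :=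
    hIntOn _ (((hcη.pow 2).continuousOn.mul (hcup (2 * k - 2))).mul hcS₂)
  have hintB : IntegrableOn
      (fun x => η x * u x ^ (2 * k - 1) * ∑ i, fderiv ℝ η x (e i) * fderiv ℝ u x (e i))
      (ball y₀ (2 * μ / 3)) volume :=
    hIntOn _ ((hcη.continuousOn.mul (hcup (2 * k - 1))).mul hcS₁)
  have hintC : IntegrableOn
      (fun x => u x ^ (2 * k) * ∑ i, (fderiv ℝ η x (e i)) ^ 2)
      (ball y₀ (2 * μ / 3)) volume :=
    hIntOn _ ((hcup (2 * k)).mul hcS₃.continuousOn)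
  -- expansion of the gradient-norm integrand
  have hvfd : ∀ x ∈ Ω, HasFDerivAt (fun y => η y * u y ^ k)
      ((η x) • ((k * u x ^ (k - 1)) • fderiv ℝ u x) + (u x ^ k) • fderiv ℝ η x) x :=
    fun x hx => (hηfd x).mul (hurfd k x hx)
  have hpt : ∀ x ∈ ball y₀ (2 * μ / 3),
      ‖fderiv ℝ (fun y => η y * u y ^ k) x‖ ^ 2
      = k ^ 2 * (η x ^ 2 * u x ^ (2 * k - 2) * ∑ i, (fderiv ℝ u x (e i)) ^ 2)
        + (2 * k * (η x * u x ^ (2 * k - 1) *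
            ∑ i, fderiv ℝ η x (e i) * fderiv ℝ u x (e i))
          + u x ^ (2 * k) * ∑ i, (fderiv ℝ η x (e i)) ^ 2) := by
    intro x hx
    have hxΩ := hB₀Ω hx
    have hb0 := hpos x hxΩ
    have hb1 : u x ^ (k - 1) * u x ^ (k - 1) = u x ^ (2 * k - 2) := by
      rw [← Real.rpow_add hb0, show (k - 1) + (k - 1) = 2 * k - 2 by ring]
    have hb2 : u x ^ (k - 1) * u x ^ k = u x ^ (2 * k - 1) := by
      rw [← Real.rpow_add hb0, show (k - 1) + k = 2 * k - 1 by ring]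
    have hb3 : u x ^ k * u x ^ k = u x ^ (2 * k) := by
      rw [← Real.rpow_add hb0, show k + k = 2 * k by ring]
    rw [(hvfd x hxΩ).fderiv, Stmt9Aux.clm_norm_sq]
    simp only [he, ContinuousLinearMap.add_apply, ContinuousLinearMap.coe_smul',
      Pi.smul_apply, smul_eq_mul]
    calc ∑ i, (η x * (k * u x ^ (k - 1) * fderiv ℝ u x (EuclideanSpace.single i 1))
            + u x ^ k * fderiv ℝ η x (EuclideanSpace.single i 1)) ^ 2
        = ∑ i, (k ^ 2 * (η x ^ 2 * u x ^ (2 * k - 2) *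
              (fderiv ℝ u x (EuclideanSpace.single i 1)) ^ 2)
            + (2 * k * (η x * u x ^ (2 * k - 1) *
                (fderiv ℝ η x (EuclideanSpace.single i 1)
                  * fderiv ℝ u x (EuclideanSpace.single i 1)))
              + u x ^ (2 * k) * (fderiv ℝ η x (EuclideanSpace.single i 1)) ^ 2)) := by
          refine Finset.sum_congr rfl fun i _ => ?_
          linear_combination
            (η x) ^ 2 * k ^ 2 * (fderiv ℝ u x (EuclideanSpace.single i 1)) ^ 2 * hb1
            + 2 * k * (η x) * (fderiv ℝ u x (EuclideanSpace.single i 1))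
                * (fderiv ℝ η x (EuclideanSpace.single i 1)) * hb2
            + (fderiv ℝ η x (EuclideanSpace.single i 1)) ^ 2 * hb3
      _ = k ^ 2 * (η x ^ 2 * u x ^ (2 * k - 2) *
              ∑ i, (fderiv ℝ u x (EuclideanSpace.single i 1)) ^ 2)
          + (2 * k * (η x * u x ^ (2 * k - 1) *
              ∑ i, fderiv ℝ η x (EuclideanSpace.single i 1)
                * fderiv ℝ u x (EuclideanSpace.single i 1))
            + u x ^ (2 * k) *
              ∑ i, (fderiv ℝ η x (EuclideanSpace.single i 1)) ^ 2) := by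
          rw [Finset.sum_add_distrib, Finset.sum_add_distrib]
          simp only [Finset.mul_sum]
  have step1 : ∫ x in ball y₀ (2 * μ / 3), ‖fderiv ℝ (fun y => η y * u y ^ k) x‖ ^ 2
      = k ^ 2 * (∫ x in ball y₀ (2 * μ / 3),
            η x ^ 2 * u x ^ (2 * k - 2) * ∑ i, (fderiv ℝ u x (e i)) ^ 2)
        + (2 * k * (∫ x in ball y₀ (2 * μ / 3),
              η x * u x ^ (2 * k - 1) * ∑ i, fderiv ℝ η x (e i) * fderiv ℝ u x (e i))
          + ∫ x in ball y₀ (2 * μ / 3),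
              u x ^ (2 * k) * ∑ i, (fderiv ℝ η x (e i)) ^ 2) := by
    have hintBC : Integrable (fun x =>
        2 * k * (η x * u x ^ (2 * k - 1) * ∑ i, fderiv ℝ η x (e i) * fderiv ℝ u x (e i))
          + u x ^ (2 * k) * ∑ i, (fderiv ℝ η x (e i)) ^ 2)
        (volume.restrict (ball y₀ (2 * μ / 3))) :=
      (hintB.const_mul (2 * k)).add hintC
    rw [setIntegral_congr_fun measurableSet_ball hpt]
    rw [integral_add (hintA.const_mul (k ^ 2)) hintBC]
    rw [integral_add (hintB.const_mul (2 * k)) hintC, integral_const_mul, integral_const_mul]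
  -- recombine E1 and E2
  have E1' : ∫ x in ball y₀ (2 * μ / 3), η x ^ 2 * u x ^ (N' + 2 * k - 2)
      = (2 * k - 1) * (∫ x in ball y₀ (2 * μ / 3),
            η x ^ 2 * u x ^ (2 * k - 2) * ∑ i, (fderiv ℝ u x (e i)) ^ 2)
        + 2 * (∫ x in ball y₀ (2 * μ / 3),
            η x * u x ^ (2 * k - 1) * ∑ i, fderiv ℝ η x (e i) * fderiv ℝ u x (e i)) := by
    rw [E1, integral_add (hintA.const_mul (2 * k - 1)) (hintB.const_mul 2),
      integral_const_mul, integral_const_mul]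
  have E2' : (4 * k) * (∫ x in ball y₀ (2 * μ / 3),
        η x * u x ^ (2 * k - 1) * ∑ i, fderiv ℝ η x (e i) * fderiv ℝ u x (e i))
      = ∫ x in ball y₀ (2 * μ / 3), lap (fun y => η y ^ 2) x * u x ^ (2 * k) := by
    rw [← E2, integral_const_mul]
  -- abbreviations
  set A' : ℝ := ∫ x in ball y₀ (2 * μ / 3),
      η x ^ 2 * u x ^ (2 * k - 2) * ∑ i, (fderiv ℝ u x (e i)) ^ 2 with hA'def
  set B' : ℝ := ∫ x in ball y₀ (2 * μ / 3),
      η x * u x ^ (2 * k - 1) * ∑ i, fderiv ℝ η x (e i) * fderiv ℝ u x (e i) with hB'def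
  set C' : ℝ := ∫ x in ball y₀ (2 * μ / 3),
      u x ^ (2 * k) * ∑ i, (fderiv ℝ η x (e i)) ^ 2 with hC'def
  set T : ℝ := ∫ x in ball y₀ (2 * μ / 3), η x ^ 2 * u x ^ (N' + 2 * k - 2) with hTdef
  set L : ℝ := ∫ x in ball y₀ (2 * μ / 3), lap (fun y => η y ^ 2) x * u x ^ (2 * k) with hLdef
  -- boundedness of the sups
  have hlapηoff : ∀ x ∉ closedBall y₀ (2 * μ / 3), lap (fun y => η y ^ 2) x = 0 := by
    intro x hx
    rw [hlapη x]
    have h2 : ∀ y ∉ closedBall y₀ (2 * μ / 3), fderiv ℝ (fun y' => η y' ^ 2) y = 0 :=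
      Stmt9Aux.fderiv_zero_off isClosed_closedBall hη2off
    have h3 := Stmt9Aux.fderiv_zero_off (f := fderiv ℝ (fun y' => η y' ^ 2))
      isClosed_closedBall h2 x hx
    simp [h3]
  have hdηoff : ∀ x ∉ closedBall y₀ (2 * μ / 3), fderiv ℝ η x = 0 :=
    Stmt9Aux.fderiv_zero_off isClosed_closedBall hηcb
  have hs1bdd : BddAbove (Set.range fun x => |lap (fun y => η y ^ 2) x|) := by
    have h1 : (fun x => |lap (fun y => η y ^ 2) x|)
        = fun x => ‖lap (fun y => η y ^ 2) x‖ := by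
      funext x; rw [Real.norm_eq_abs]
    rw [h1]
    exact hclap.norm.bddAbove_range_of_hasCompactSupport
      ((HasCompactSupport.intro (isCompact_closedBall y₀ (2 * μ / 3)) hlapηoff).norm)
  have hs2bdd : BddAbove (Set.range fun x => ‖fderiv ℝ η x‖) :=
    hcdη.norm.bddAbove_range_of_hasCompactSupport
      ((HasCompactSupport.intro (isCompact_closedBall y₀ (2 * μ / 3)) hdηoff).norm)
  have hI2k : IntegrableOn (fun x => u x ^ (2 * k)) (ball y₀ (2 * μ / 3)) volume :=
    hIntOn _ (hcup (2 * k))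
  have step5 : L ≤ (⨆ x, |lap (fun y => η y ^ 2) x|)
      * ∫ x in ball y₀ (2 * μ / 3), u x ^ (2 * k) := by
    rw [hLdef, ← integral_const_mul]
    refine setIntegral_mono_on (hIntOn _ (hclap.continuousOn.mul (hcup (2 * k))))
      (hI2k.const_mul _) measurableSet_ball (fun x hx => ?_)
    have h1 : lap (fun y => η y ^ 2) x ≤ ⨆ x, |lap (fun y => η y ^ 2) x| :=
      (le_abs_self _).trans (le_ciSup hs1bdd x)
    exact mul_le_mul_of_nonneg_right h1 (Real.rpow_nonneg (hpos x (hB₀Ω hx)).le _)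
  have step6 : C' ≤ (⨆ x, ‖fderiv ℝ η x‖) ^ 2
      * ∫ x in ball y₀ (2 * μ / 3), u x ^ (2 * k) := by
    rw [hC'def, ← integral_const_mul]
    refine setIntegral_mono_on hintC (hI2k.const_mul _) measurableSet_ball (fun x hx => ?_)
    have h1 : ∑ i, (fderiv ℝ η x (e i)) ^ 2 = ‖fderiv ℝ η x‖ ^ 2 := by
      rw [Stmt9Aux.clm_norm_sq (fderiv ℝ η x)]
    calc u x ^ (2 * k) * ∑ i, (fderiv ℝ η x (e i)) ^ 2
        = ‖fderiv ℝ η x‖ ^ 2 * u x ^ (2 * k) := by rw [h1, mul_comm]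
      _ ≤ (⨆ x, ‖fderiv ℝ η x‖) ^ 2 * u x ^ (2 * k) :=
          mul_le_mul_of_nonneg_right
            (pow_le_pow_left₀ (norm_nonneg _) (le_ciSup hs2bdd x) 2)
            (Real.rpow_nonneg (hpos x (hB₀Ω hx)).le _)
  -- Hölder inequality
  haveI hfinB : IsFiniteMeasure (volume.restrict (ball y₀ (2 * μ / 3))) := by
    constructor
    rw [Measure.restrict_apply_univ]
    exact measure_ball_lt_top
  have hconj : Real.HolderConjugate (N' / (N' - 2)) (N' / 2) := by
    rw [Real.holderConjugate_iff]
    constructor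
    · exact (one_lt_div (by linarith)).2 (by linarith)
    · rw [inv_div, inv_div]
      rw [← add_div, sub_add_cancel, div_self hN0.ne']
  have hcf1 : ContinuousOn (fun x => u x ^ (N' - 2)) Ω := hcup (N' - 2)
  have hcf2 : ContinuousOn (fun x => (η x * u x ^ k) ^ (2 : ℝ)) Ω :=
    (hcη.continuousOn.mul (hcup k)).rpow_const (fun x _ => Or.inr (by norm_num))
  obtain ⟨M1, hM1⟩ := (isCompact_closedBall y₀ (2 * μ / 3)).exists_bound_of_continuousOn
    (hcf1.mono hcbΩ)
  obtain ⟨M2, hM2⟩ := (isCompact_closedBall y₀ (2 * μ / 3)).exists_bound_of_continuousOn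
    (hcf2.mono hcbΩ)
  have hmem1 : MemLp (fun x => u x ^ (N' - 2)) (ENNReal.ofReal (N' / (N' - 2)))
      (volume.restrict (ball y₀ (2 * μ / 3))) := by
    refine MemLp.of_bound ((hcf1.mono hB₀Ω).aestronglyMeasurable measurableSet_ball) M1 ?_
    exact (ae_restrict_iff' measurableSet_ball).2
      (ae_of_all _ fun x hx => hM1 x (ball_subset_closedBall hx))
  have hmem2 : MemLp (fun x => (η x * u x ^ k) ^ (2 : ℝ)) (ENNReal.ofReal (N' / 2))
      (volume.restrict (ball y₀ (2 * μ / 3))) := by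
    refine MemLp.of_bound ((hcf2.mono hB₀Ω).aestronglyMeasurable measurableSet_ball) M2 ?_
    exact (ae_restrict_iff' measurableSet_ball).2
      (ae_of_all _ fun x hx => hM2 x (ball_subset_closedBall hx))
  have hnn1 : 0 ≤ᵐ[volume.restrict (ball y₀ (2 * μ / 3))] (fun x => u x ^ (N' - 2)) :=
    (ae_restrict_iff' measurableSet_ball).2
      (ae_of_all _ fun x hx => Real.rpow_nonneg (hpos x (hB₀Ω hx)).le _)
  have hnn2 : 0 ≤ᵐ[volume.restrict (ball y₀ (2 * μ / 3))]
      (fun x => (η x * u x ^ k) ^ (2 : ℝ)) :=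
    (ae_restrict_iff' measurableSet_ball).2
      (ae_of_all _ fun x hx => Real.rpow_nonneg
        (mul_nonneg (hη0 x) (Real.rpow_nonneg (hpos x (hB₀Ω hx)).le _)) _)
  have hHo := integral_mul_le_Lp_mul_Lq_of_nonneg hconj hnn1 hnn2 hmem1 hmem2
  have hcc1 : ∫ x in ball y₀ (2 * μ / 3), u x ^ (N' - 2) * (η x * u x ^ k) ^ (2 : ℝ)
      = T := by
    rw [hTdef]
    refine setIntegral_congr_fun measurableSet_ball (fun x hx => ?_)
    have hb0 := hpos x (hB₀Ω hx)
    have hη2c : (η x) ^ (2 : ℝ) = η x ^ (2 : ℕ) := by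
      rw [← Real.rpow_natCast (η x) 2]; norm_num
    have hu2c : (u x ^ k) ^ (2 : ℝ) = u x ^ (k * 2) := (Real.rpow_mul hb0.le k 2).symm
    rw [Real.mul_rpow (hη0 x) (Real.rpow_nonneg hb0.le k), hη2c, hu2c,
      show N' + 2 * k - 2 = (N' - 2) + k * 2 by ring, Real.rpow_add hb0]
    ring
  have hcc2 : ∫ x in ball y₀ (2 * μ / 3), (u x ^ (N' - 2)) ^ (N' / (N' - 2))
      = ∫ x in ball y₀ (2 * μ / 3), u x ^ N' := by
    refine setIntegral_congr_fun measurableSet_ball (fun x hx => ?_)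
    have hb0 := hpos x (hB₀Ω hx)
    rw [← Real.rpow_mul hb0.le, show (N' - 2) * (N' / (N' - 2)) = N' by
      rw [mul_div_assoc']
      exact mul_div_cancel_left₀ _ (by linarith)]
  have hcc3 : ∫ x in ball y₀ (2 * μ / 3), ((η x * u x ^ k) ^ (2 : ℝ)) ^ (N' / 2)
      = ∫ x in ball y₀ (2 * μ / 3), (η x * u x ^ k) ^ N' := by
    refine setIntegral_congr_fun measurableSet_ball (fun x hx => ?_)
    have hb0 : (0 : ℝ) ≤ η x * u x ^ k :=
      mul_nonneg (hη0 x) (Real.rpow_nonneg (hpos x (hB₀Ω hx)).le _)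
    rw [← Real.rpow_mul hb0, show (2 : ℝ) * (N' / 2) = N' by ring]
  rw [hcc1, hcc2, hcc3, one_div_div, one_div_div] at hHo
  -- final assembly
  have hkne : k ≠ 0 := hk0.ne'
  have hcn1 : (0 : ℝ) ≤ (2 * k - 2) / (4 * k ^ 2) :=
    div_nonneg (by linarith) (by positivity)
  have hcn2 : (0 : ℝ) ≤ (2 * k - 1) / k ^ 2 :=
    div_nonneg (by linarith) (by positivity)
  have hkey : (2 * k - 1) / k ^ 2 * (k ^ 2 * A' + (2 * k * B' + C'))
      = T + (2 * k - 2) / (4 * k ^ 2) * L + (2 * k - 1) / k ^ 2 * C' := by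
    rw [E1', ← E2']
    field_simp
    ring
  rw [step1, hkey]
  calc T + (2 * k - 2) / (4 * k ^ 2) * L + (2 * k - 1) / k ^ 2 * C'
      ≤ (∫ x in ball y₀ (2 * μ / 3), u x ^ N') ^ ((N' - 2) / N')
          * (∫ x in ball y₀ (2 * μ / 3), (η x * u x ^ k) ^ N') ^ (2 / N')
        + (2 * k - 2) / (4 * k ^ 2) * ((⨆ x, |lap (fun y => η y ^ 2) x|)
            * ∫ x in ball y₀ (2 * μ / 3), u x ^ (2 * k))
        + (2 * k - 1) / k ^ 2 * ((⨆ x, ‖fderiv ℝ η x‖) ^ 2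
            * ∫ x in ball y₀ (2 * μ / 3), u x ^ (2 * k)) :=
      add_le_add (add_le_add hHo (mul_le_mul_of_nonneg_left step5 hcn1))
        (mul_le_mul_of_nonneg_left step6 hcn2)
    _ = (∫ x in ball y₀ (2 * μ / 3), u x ^ N') ^ ((N' - 2) / N')
          * (∫ x in ball y₀ (2 * μ / 3), (η x * u x ^ k) ^ N') ^ (2 / N')
        + ((2 * k - 2) / (4 * k ^ 2) * (⨆ x, |lap (fun y => η y ^ 2) x|)
            + (2 * k - 1) / k ^ 2 * (⨆ x, ‖fderiv ℝ η x‖) ^ 2)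
          * ∫ x in ball y₀ (2 * μ / 3), u x ^ (2 * k) := by ring
end
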